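/- Let X ∈ ℝ^{n×d}, y ∈ ℝ^n, A = [X y] ∈ ℝ^{n×(d+1)}, and let M ∈ ℝ^{p×(d+1)} be any matrix. Let = [A; M] ∈ ℝ^{(n+p)×(d+1)} be A with M stacked below it. Let S ∈ ℝ^{r×(n+p)} and 0 < μ < 1, and assume that for every v ∈ ℝ^{d+1}, (1−μ)‖Âv‖₂² ≤ ‖SÂv‖₂² ≤ (1+μ)‖Âv‖₂². If β ∈ ℝ^d minimizes the sketched objective β̃ ↦ ‖SÂβ̃₋₁‖₂, where β̃₋₁ = (β̃, −1), then for every β̃ ∈ ℝ^d, ‖Xβ − y‖₂² + ‖Mβ₋₁‖₂² ≤ ((1+μ)/(1−μ))·(‖Xβ̃ − y‖₂² + ‖Mβ̃₋₁‖₂²). In other words, solving the least-squares problem on the sketch SÂ yields an approximate minimizer of the regularized problem β̃ ↦ ‖Xβ̃ − y‖₂² + ‖Mβ̃₋₁‖₂². -/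

import Mathlib

open Matrix BigOperators

/-- Squared Euclidean norm of a vector. -/
def euclNormSq {ι : Type*} [Fintype ι] (v : ι → ℝ) : ℝ := ∑ i, (v i) ^ 2

/-- Euclidean norm of a vector. -/
noncomputable def euclNorm {ι : Type*} [Fintype ι] (v : ι → ℝ) : ℝ :=
  Real.sqrt (∑ i, (v i) ^ 2)

lemma euclNormSq_nonneg {ι : Type*} [Fintype ι] (v : ι → ℝ) : 0 ≤ euclNormSq v :=
  Finset.sum_nonneg fun i _ => sq_nonneg _

lemma euclNormSq_sum {ι κ : Type*} [Fintype ι] [Fintype κ] (v : ι ⊕ κ → ℝ) :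
    euclNormSq v = euclNormSq (v ∘ Sum.inl) + euclNormSq (v ∘ Sum.inr) := by
  simp [euclNormSq, Fintype.sum_sum_type, Function.comp]

/-- Solving least squares on a sketch of the noise-augmented matrix `Â = [A; M]`
(where `A = [X y]`) approximately minimizes the regularized objective
`β̃ ↦ ‖X β̃ − y‖₂² + ‖M β̃₋₁‖₂²`. -/
theorem stmt5 {n d p r : ℕ} (X : Matrix (Fin n) (Fin d) ℝ) (y : Fin n → ℝ)
    (A : Matrix (Fin n) (Fin d ⊕ Unit) ℝ)
    (hA : A = fun i => Sum.elim (X i) (fun _ => y i))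
    (M : Matrix (Fin p) (Fin d ⊕ Unit) ℝ)
    (Ahat : Matrix (Fin n ⊕ Fin p) (Fin d ⊕ Unit) ℝ)
    (hAhat : Ahat = Matrix.fromRows A M)
    (S : Matrix (Fin r) (Fin n ⊕ Fin p) ℝ) (μ : ℝ) (hμ0 : 0 < μ) (hμ1 : μ < 1)
    (hembed : ∀ v : Fin d ⊕ Unit → ℝ,
      (1 - μ) * euclNormSq (Ahat.mulVec v) ≤ euclNormSq ((S * Ahat).mulVec v) ∧
      euclNormSq ((S * Ahat).mulVec v) ≤ (1 + μ) * euclNormSq (Ahat.mulVec v))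
    (β : Fin d → ℝ)
    (hmin : ∀ βt : Fin d → ℝ,
      euclNorm ((S * Ahat).mulVec (Sum.elim β fun _ => -1)) ≤
        euclNorm ((S * Ahat).mulVec (Sum.elim βt fun _ => -1))) :
    ∀ βt : Fin d → ℝ,
      euclNormSq (X.mulVec β - y) + euclNormSq (M.mulVec (Sum.elim β fun _ => -1)) ≤
        ((1 + μ) / (1 - μ)) *
          (euclNormSq (X.mulVec βt - y) +
            euclNormSq (M.mulVec (Sum.elim βt fun _ => -1))) := by
  intro βt
  -- A.mulVec (Sum.elim b (-1)) = X.mulVec b - y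
  have hAmul : ∀ b : Fin d → ℝ,
      A.mulVec (Sum.elim b fun _ => -1) = X.mulVec b - y := by
    intro b
    funext i
    simp [hA, Matrix.mulVec, dotProduct, Fintype.sum_sum_type, mul_comm, sub_eq_add_neg]
  -- splitting the big objective
  have hsplit : ∀ b : Fin d → ℝ,
      euclNormSq (Ahat.mulVec (Sum.elim b fun _ => -1)) =
        euclNormSq (X.mulVec b - y) +
          euclNormSq (M.mulVec (Sum.elim b fun _ => -1)) := by
    intro b
    have : Ahat.mulVec (Sum.elim b fun _ => -1) =
        Sum.elim (A.mulVec (Sum.elim b fun _ => -1))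
          (M.mulVec (Sum.elim b fun _ => -1)) := by
      subst hAhat
      funext i
      cases i <;> simp [Matrix.fromRows_apply_inl, Matrix.fromRows_apply_inr, Matrix.mulVec, dotProduct]
    rw [this, euclNormSq_sum, hAmul]
    rfl
  -- squared minimality
  have hminSq : euclNormSq ((S * Ahat).mulVec (Sum.elim β fun _ => -1)) ≤
      euclNormSq ((S * Ahat).mulVec (Sum.elim βt fun _ => -1)) := by
    have h := hmin βt
    have h1 := euclNormSq_nonneg ((S * Ahat).mulVec (Sum.elim β fun _ => -1))
    have h2 := euclNormSq_nonneg ((S * Ahat).mulVec (Sum.elim βt fun _ => -1))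
    rw [euclNorm, euclNorm] at h
    simpa [euclNormSq] using (Real.sqrt_le_sqrt_iff (by simpa [euclNormSq] using h2)).mp h
  have h1 := (hembed (Sum.elim β fun _ => -1)).1
  have h2 := (hembed (Sum.elim βt fun _ => -1)).2
  have key : (1 - μ) * euclNormSq (Ahat.mulVec (Sum.elim β fun _ => -1)) ≤
      (1 + μ) * euclNormSq (Ahat.mulVec (Sum.elim βt fun _ => -1)) :=
    le_trans h1 (le_trans hminSq h2)
  have hpos : (0:ℝ) < 1 - μ := by linarith
  rw [hsplit, hsplit] at key
  rw [div_mul_eq_mul_div, le_div_iff₀ hpos]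
  linarith
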